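/- Fix an integer M ≥ 2 and q ∈ (0,1). Define δ = M^2 · q^2 · Σ_{k=0}^{M-2} (1/(k+2)^2) · C(M-2, k) q^k (1-q)^{M-2-k}. Then δ = (M/(M-1)) · Σ_{k=2}^{M} ((k-1)/k) · C(M, k) q^k (1-q)^{M-k}, and δ ≤ 1 - (1-q)^M ≤ 1. -/
import Mathlib


/-- For `M ≥ 2` and `q ∈ (0,1)`, the quantity
`δ = M² q² ∑_{k=0}^{M-2} (1/(k+2)²) C(M-2,k) qᵏ (1-q)^{M-2-k}`
satisfies `δ = (M/(M-1)) ∑_{k=2}^{M} ((k-1)/k) C(M,k) qᵏ (1-q)^{M-k}` and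
`δ ≤ 1 - (1-q)^M ≤ 1`. -/
theorem binomial_delta_identity_and_bound (M : ℕ) (hM : 2 ≤ M) (q : ℝ)
    (hq : q ∈ Set.Ioo (0 : ℝ) 1) (δ : ℝ)
    (hδ : δ = (M : ℝ) ^ 2 * q ^ 2 *
        ∑ k ∈ Finset.range (M - 1),
          (1 / ((k : ℝ) + 2) ^ 2) * ((M - 2).choose k) * q ^ k * (1 - q) ^ (M - 2 - k)) :
    δ = ((M : ℝ) / ((M : ℝ) - 1)) *
        ∑ k ∈ Finset.Icc 2 M, (((k : ℝ) - 1) / (k : ℝ)) * (M.choose k) * q ^ k * (1 - q) ^ (M - k)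
      ∧ δ ≤ 1 - (1 - q) ^ M ∧ 1 - (1 - q) ^ M ≤ 1 := by
  obtain ⟨m, rfl⟩ : ∃ m, M = m + 2 := ⟨M - 2, by omega⟩
  obtain ⟨hq0, hq1⟩ := hq
  have h1q : (0:ℝ) < 1 - q := by linarith
  have hm0 : (0:ℝ) ≤ (m:ℝ) := Nat.cast_nonneg m
  -- reindex the Icc sum
  have hIcc : ∀ g : ℕ → ℝ, ∑ k ∈ Finset.Icc 2 (m+2), g k = ∑ i ∈ Finset.range (m+1), g (2+i) := by
    intro g
    rw [← Finset.Ico_add_one_right_eq_Icc, Finset.sum_Ico_eq_sum_range]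
    congr 1
  have h1 : δ = ((m+2 : ℕ) : ℝ) / (((m+2 : ℕ) : ℝ) - 1) *
      ∑ k ∈ Finset.Icc 2 (m+2), (((k : ℝ) - 1) / (k : ℝ)) * (((m+2).choose k : ℕ) : ℝ) * q ^ k * (1 - q) ^ (m + 2 - k) := by
    rw [hδ, hIcc, Finset.mul_sum, Finset.mul_sum]
    have e1 : m + 2 - 2 = m := by omega
    have e2 : m + 2 - 1 = m + 1 := by omega
    rw [e1, e2]
    apply Finset.sum_congr rfl
    intro k _
    have e3 : m + 2 - (2 + k) = m - k := by omega
    rw [e3, show 2 + k = k + 2 from by omega]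
    have hk2 : ((k:ℝ) + 2) ≠ 0 := by positivity
    have hk1 : ((k:ℝ) + 1) ≠ 0 := by positivity
    have hm1 : ((m:ℝ)+2) - 1 ≠ 0 := by intro h; linarith [h]
    have hnat1 := Nat.add_one_mul_choose_eq (m+1) (k+1)
    have hnat2 := Nat.add_one_mul_choose_eq m k
    have h1' : ((m:ℝ)+2) * ((m+1).choose (k+1) : ℝ) = ((m+2).choose (k+2) : ℝ) * ((k:ℝ)+2) := by
      exact_mod_cast hnat1
    have h2' : ((m:ℝ)+1) * ((m.choose k) : ℝ) = ((m+1).choose (k+1) : ℝ) * ((k:ℝ)+1) := by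
      exact_mod_cast hnat2
    have hC : (((m+2).choose (k+2)) : ℝ) = ((m:ℝ)+2) * ((m:ℝ)+1) * (m.choose k) / (((k:ℝ)+2) * ((k:ℝ)+1)) := by
      rw [eq_div_iff (by positivity)]
      linear_combination (-((k:ℝ)+1)) * h1' - ((m:ℝ)+2) * h2'
    push_cast
    rw [hC]
    field_simp
    ring
  refine ⟨h1, ?_, ?_⟩
  · -- δ ≤ 1 - (1-q)^(m+2)
    have hterm_nonneg : ∀ k, 0 ≤ (((m+2).choose k : ℝ)) * q ^ k * (1 - q) ^ (m + 2 - k) := by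
      intro k; positivity
    have hstep1 : δ ≤ ∑ k ∈ Finset.Icc 2 (m+2), (((m+2).choose k : ℝ)) * q ^ k * (1 - q) ^ (m + 2 - k) := by
      rw [h1, Finset.mul_sum]
      apply Finset.sum_le_sum
      intro k hk
      obtain ⟨hk2, hkM⟩ := Finset.mem_Icc.mp hk
      have hk2' : (2:ℝ) ≤ (k:ℝ) := by exact_mod_cast hk2
      have hkM' : (k:ℝ) ≤ (m:ℝ) + 2 := by exact_mod_cast hkM
      have hfac : ((m:ℝ)+2) / (((m:ℝ)+2) - 1) * (((k:ℝ) - 1) / (k:ℝ)) ≤ 1 := by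
        rw [div_mul_div_comm, div_le_one (by nlinarith)]
        nlinarith
      have hbase := hterm_nonneg k
      calc (((m+2 : ℕ) : ℝ)) / (((m+2 : ℕ) : ℝ) - 1) * ((((k : ℝ) - 1) / (k : ℝ)) * ((m+2).choose k) * q ^ k * (1 - q) ^ (m + 2 - k))
          = (((m:ℝ)+2) / (((m:ℝ)+2) - 1) * (((k:ℝ) - 1) / (k:ℝ))) * ((((m+2).choose k : ℝ)) * q ^ k * (1 - q) ^ (m + 2 - k)) := by
            push_cast; ring
        _ ≤ 1 * ((((m+2).choose k : ℝ)) * q ^ k * (1 - q) ^ (m + 2 - k)) :=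
            mul_le_mul_of_nonneg_right hfac hbase
        _ = (((m+2).choose k : ℝ)) * q ^ k * (1 - q) ^ (m + 2 - k) := by ring
    have hstep2 : ∑ k ∈ Finset.Icc 2 (m+2), (((m+2).choose k : ℝ)) * q ^ k * (1 - q) ^ (m + 2 - k)
        ≤ ∑ k ∈ Finset.Icc 1 (m+2), (((m+2).choose k : ℝ)) * q ^ k * (1 - q) ^ (m + 2 - k) := by
      apply Finset.sum_le_sum_of_subset_of_nonneg
      · exact Finset.Icc_subset_Icc_left (by norm_num)
      · intro k _ _; exact hterm_nonneg k
    have hsum1 : ∑ k ∈ Finset.range (m+3), (((m+2).choose k : ℝ)) * q ^ k * (1 - q) ^ (m + 2 - k) = 1 := by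
      conv_rhs => rw [show (1:ℝ) = (q + (1 - q)) ^ (m+2) by norm_num]
      rw [add_pow]
      apply Finset.sum_congr rfl
      intro k _
      ring
    have hsplit : ∑ k ∈ Finset.range (m+3), (((m+2).choose k : ℝ)) * q ^ k * (1 - q) ^ (m + 2 - k)
        = (∑ k ∈ Finset.Icc 1 (m+2), (((m+2).choose k : ℝ)) * q ^ k * (1 - q) ^ (m + 2 - k)) + (1-q)^(m+2) := by
      rw [Finset.sum_range_succ' (fun k => (((m+2).choose k : ℝ)) * q ^ k * (1 - q) ^ (m + 2 - k)) (m+2)]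
      simp only [Nat.choose_zero_right, pow_zero, Nat.cast_one, one_mul, mul_one, Nat.sub_zero]
      congr 1
      rw [← Finset.Ico_add_one_right_eq_Icc, Finset.sum_Ico_eq_sum_range]
      apply Finset.sum_congr (by congr 1)
      intro i _
      rw [Nat.add_comm 1 i]
    have hIcc1 : ∑ k ∈ Finset.Icc 1 (m+2), (((m+2).choose k : ℝ)) * q ^ k * (1 - q) ^ (m + 2 - k)
        = 1 - (1-q)^(m+2) := by
      rw [hsplit] at hsum1; linarith
    linarith
  · have : (0:ℝ) ≤ (1-q)^(m+2) := by positivity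
    linarith
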